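/- Fidelity bound for gentle conjugation. Let ρ_{AB} be a density operator on A⊗B, and let σ_B and Δ_B be positive semidefinite operators on B with ρ_B = Tr_A ρ_{AB} ≤ σ_B + Δ_B and σ_B + Δ_B positive definite. Set G_B = σ_B^{1/2}·(σ_B + Δ_B)^{−1/2}. Then F(ρ_{AB}, (1_A ⊗ G_B) ρ_{AB} (1_A ⊗ G_B†)) ≥ 1 − Tr Δ_B. -/

import Mathlib

open Matrix MeasureTheory
open scoped Kronecker ENNReal ComplexOrder

noncomputable section

/-- Borel measurable structure on matrices. -/
instance matrixMeasurableSpace (n : Type*) [Fintype n] : MeasurableSpace (Matrix n n ℂ) :=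
  borel _

/-- A density operator: positive semidefinite with unit trace. -/
def IsDensity {n : Type*} [Fintype n] (ρ : Matrix n n ℂ) : Prop :=
  ρ.PosSemidef ∧ ρ.trace = 1

/-- A subnormalized state: positive semidefinite with trace at most one. -/
def IsSubState {n : Type*} [Fintype n] (ρ : Matrix n n ℂ) : Prop :=
  ρ.PosSemidef ∧ (ρ.trace).re ≤ 1

/-- The square root `PosSemidef.sqrt` of the older Mathlib, spelled out with its old definition. -/
def posSemidefSqrt {n : Type*} [Fintype n] [DecidableEq n] {X : Matrix n n ℂ} (hX : X.PosSemidef) :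
    Matrix n n ℂ :=
  (hX.1.eigenvectorUnitary : Matrix n n ℂ) *
    diagonal (fun i => ((Real.sqrt (hX.1.eigenvalues i) : ℝ) : ℂ)) *
    (star hX.1.eigenvectorUnitary : Matrix n n ℂ)

-- Positive semidefinite square root (junk value `0` on non-PSD input).
open scoped Classical in
def msqrt {n : Type*} [Fintype n] [DecidableEq n] (X : Matrix n n ℂ) : Matrix n n ℂ :=
  if h : X.PosSemidef then posSemidefSqrt h else 0

/-- Trace norm `‖X‖₁ = Tr √(XᴴX)`. -/
def traceNorm {n : Type*} [Fintype n] [DecidableEq n] (X : Matrix n n ℂ) : ℝ :=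
  (posSemidefSqrt (Matrix.posSemidef_conjTranspose_mul_self X)).trace.re

/-- Fidelity `F(ρ,σ) = ‖√ρ√σ‖₁`. -/
def fid {n : Type*} [Fintype n] [DecidableEq n] (ρ σ : Matrix n n ℂ) : ℝ :=
  traceNorm (msqrt ρ * msqrt σ)

/-- Generalized fidelity of subnormalized states. -/
def gFid {n : Type*} [Fintype n] [DecidableEq n] (ρ σ : Matrix n n ℂ) : ℝ :=
  fid ρ σ + Real.sqrt ((1 - ρ.trace.re) * (1 - σ.trace.re))

/-- Purified distance. -/
def pDist {n : Type*} [Fintype n] [DecidableEq n] (ρ σ : Matrix n n ℂ) : ℝ :=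
  Real.sqrt (1 - (gFid ρ σ) ^ 2)

/-- The ε-ball of subnormalized states around `ρ` in purified distance. -/
def pBall {n : Type*} [Fintype n] [DecidableEq n] (ε : ℝ) (ρ : Matrix n n ℂ) :
    Set (Matrix n n ℂ) :=
  {τ | IsSubState τ ∧ pDist ρ τ ≤ ε}

/-- Partial trace over the second tensor factor. -/
def ptraceB {a b : Type*} [Fintype b] (ρ : Matrix (a × b) (a × b) ℂ) : Matrix a a ℂ :=
  Matrix.of fun i j => ∑ k, ρ (i, k) (j, k)

/-- Partial trace over the first tensor factor. -/
def ptraceA {a b : Type*} [Fintype a] (ρ : Matrix (a × b) (a × b) ℂ) : Matrix b b ℂ :=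
  Matrix.of fun i j => ∑ k, ρ (k, i) (k, j)

/-- Partial trace over the middle factor of `(S ⊗ E) ⊗ R`, giving a state on `S ⊗ R`. -/
def ptraceMid {s e r : Type*} [Fintype e]
    (ρ : Matrix ((s × e) × r) ((s × e) × r) ℂ) : Matrix (s × r) (s × r) ℂ :=
  Matrix.of fun p q => ∑ k, ρ ((p.1, k), p.2) ((q.1, k), q.2)

/-- Conditional min-entropy `H_min(A|B)_ρ` (first factor conditioned on the second). -/
def Hmin {a b : Type*} [Fintype a] [Fintype b] [DecidableEq a]
    (ρ : Matrix (a × b) (a × b) ℂ) : ℝ :=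
  sSup {l : ℝ | ∃ σ : Matrix b b ℂ, IsDensity σ ∧
    (((2 : ℝ) ^ (-l) • ((1 : Matrix a a ℂ) ⊗ₖ σ)) - ρ).PosSemidef}

/-- Smooth conditional min-entropy `H_min^ε(A|B)_ρ`. -/
def sHmin {a b : Type*} [Fintype a] [Fintype b] [DecidableEq a] [DecidableEq b]
    (ε : ℝ) (ρ : Matrix (a × b) (a × b) ℂ) : ℝ :=
  sSup (Hmin '' pBall ε ρ)

/-- Non-conditional min-entropy. -/
def Hmin0 {a : Type*} [Fintype a] [DecidableEq a] (ρ : Matrix a a ℂ) : ℝ :=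
  sSup {l : ℝ | (((2 : ℝ) ^ (-l) • (1 : Matrix a a ℂ)) - ρ).PosSemidef}

/-- Smooth non-conditional min-entropy. -/
def sHmin0 {a : Type*} [Fintype a] [DecidableEq a] (ε : ℝ) (ρ : Matrix a a ℂ) : ℝ :=
  sSup (Hmin0 '' pBall ε ρ)

/-- Conditional max-entropy `H_max(A|B)_ρ`. -/
def Hmax {a b : Type*} [Fintype a] [Fintype b] [DecidableEq a] [DecidableEq b]
    (ρ : Matrix (a × b) (a × b) ℂ) : ℝ :=
  sSup {x : ℝ | ∃ σ : Matrix b b ℂ, IsDensity σ ∧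
    x = Real.logb 2 ((fid ρ ((1 : Matrix a a ℂ) ⊗ₖ σ)) ^ 2)}

/-- Smooth conditional max-entropy `H_max^ε(A|B)_ρ`. -/
def sHmax {a b : Type*} [Fintype a] [Fintype b] [DecidableEq a] [DecidableEq b]
    (ε : ℝ) (ρ : Matrix (a × b) (a × b) ℂ) : ℝ :=
  sInf (Hmax '' pBall ε ρ)

/-- Non-conditional max-entropy `H_max(A)_ρ = log₂ F(ρ, 1)²`. -/
def Hmax0 {a : Type*} [Fintype a] [DecidableEq a] (ρ : Matrix a a ℂ) : ℝ :=
  Real.logb 2 ((fid ρ (1 : Matrix a a ℂ)) ^ 2)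

/-- Smooth non-conditional max-entropy. -/
def sHmax0 {a : Type*} [Fintype a] [DecidableEq a] (ε : ℝ) (ρ : Matrix a a ℂ) : ℝ :=
  sInf (Hmax0 '' pBall ε ρ)

/-- Alternative conditional min-entropy `Ĥ_min(A|B)_ρ` (conditioning on the marginal itself). -/
def HminAlt {a b : Type*} [Fintype a] [Fintype b] [DecidableEq a]
    (ρ : Matrix (a × b) (a × b) ℂ) : ℝ :=
  sSup {l : ℝ | (((2 : ℝ) ^ (-l) • ((1 : Matrix a a ℂ) ⊗ₖ ptraceA ρ)) - ρ).PosSemidef}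

/-- Alternative smooth conditional min-entropy `Ĥ_min^ε(A|B)_ρ`. -/
def sHminAlt {a b : Type*} [Fintype a] [Fintype b] [DecidableEq a] [DecidableEq b]
    (ε : ℝ) (ρ : Matrix (a × b) (a × b) ℂ) : ℝ :=
  sSup (HminAlt '' pBall ε ρ)

/-- Hypothesis-testing relative entropy
`2^{−D_H^ε(ρ‖σ)} = (1/ε)·inf{Tr(Qσ) : 0 ≤ Q ≤ 1, Tr(Qρ) ≥ ε}`. -/
def DH {n : Type*} [Fintype n] [DecidableEq n] (ε : ℝ) (ρ σ : Matrix n n ℂ) : ℝ :=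
  - Real.logb 2 ((1 / ε) *
    sInf {x : ℝ | ∃ Q : Matrix n n ℂ, Q.PosSemidef ∧ ((1 : Matrix n n ℂ) - Q).PosSemidef ∧
      ε ≤ ((Q * ρ).trace).re ∧ x = ((Q * σ).trace).re})

/-- Hypothesis-testing conditional entropy `H_h^ε(A|B)_ρ = −D_H^ε(ρ_{AB}‖1_A⊗ρ_B)`. -/
def Hh {a b : Type*} [Fintype a] [Fintype b] [DecidableEq a] [DecidableEq b]
    (ε : ℝ) (ρ : Matrix (a × b) (a × b) ℂ) : ℝ :=
  - DH ε ρ ((1 : Matrix a a ℂ) ⊗ₖ ptraceA ρ)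

/-- Non-conditional hypothesis-testing entropy `H_h^ε(A)_ρ = −D_H^ε(ρ‖1_A)`. -/
def Hh0 {a : Type*} [Fintype a] [DecidableEq a] (ε : ℝ) (ρ : Matrix a a ℂ) : ℝ :=
  - DH ε ρ (1 : Matrix a a ℂ)

/-- Choi matrix of a linear map on matrices. -/
def choi {a b : Type*} [Fintype a] [Fintype b] [DecidableEq a]
    (T : Matrix a a ℂ →ₗ[ℂ] Matrix b b ℂ) : Matrix (a × b) (a × b) ℂ :=
  Matrix.of fun p q => (T (Matrix.single p.1 q.1 1)) p.2 q.2

/-- Complete positivity, via positivity of the Choi matrix. -/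
def IsCP {a b : Type*} [Fintype a] [Fintype b] [DecidableEq a]
    (T : Matrix a a ℂ →ₗ[ℂ] Matrix b b ℂ) : Prop :=
  (choi T).PosSemidef

/-- Trace preservation. -/
def IsTP {a b : Type*} [Fintype a] [Fintype b]
    (T : Matrix a a ℂ →ₗ[ℂ] Matrix b b ℂ) : Prop :=
  ∀ X : Matrix a a ℂ, (T X).trace = X.trace

/-- The map `T ⊗ I_R` applied entrywise to a state on `A ⊗ R`. -/
def tensId {a b r : Type*} (T : Matrix a a ℂ →ₗ[ℂ] Matrix b b ℂ)
    (ρ : Matrix (a × r) (a × r) ℂ) : Matrix (b × r) (b × r) ℂ :=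
  Matrix.of fun p q => (T (Matrix.of fun i j => ρ (i, p.2) (j, q.2))) p.1 q.1

/-- A pure state: a rank-one projector `|v⟩⟨v|`. -/
def IsPure {n : Type*} (ρ : Matrix n n ℂ) : Prop :=
  ∃ v : n → ℂ, ρ = Matrix.vecMulVec v (star v)


/-- Port helper: the old `PosSemidef.sqrt`. -/
abbrev Matrix.PosSemidef.sqrt {n : Type*} [Fintype n] [DecidableEq n] {X : Matrix n n ℂ}
    (hX : X.PosSemidef) : Matrix n n ℂ :=
  posSemidefSqrt hX

lemma Matrix.PosSemidef.posSemidef_sqrt {n : Type*} [Fintype n] [DecidableEq n]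
    {X : Matrix n n ℂ} (hX : X.PosSemidef) : hX.sqrt.PosSemidef := by
  have hd : (diagonal (fun i => ((Real.sqrt (hX.1.eigenvalues i) : ℝ) : ℂ))).PosSemidef := by
    apply Matrix.PosSemidef.diagonal
    intro i
    show (0:ℂ) ≤ ((Real.sqrt (hX.1.eigenvalues i) : ℝ) : ℂ)
    exact Complex.zero_le_real.mpr (Real.sqrt_nonneg _)
  have := hd.mul_mul_conjTranspose_same (hX.1.eigenvectorUnitary : Matrix n n ℂ)
  rwa [← Matrix.star_eq_conjTranspose] at this

lemma Matrix.PosSemidef.sqrt_mul_self {n : Type*} [Fintype n] [DecidableEq n]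
    {X : Matrix n n ℂ} (hX : X.PosSemidef) : hX.sqrt * hX.sqrt = X := by
  have hU : (star hX.1.eigenvectorUnitary : Matrix n n ℂ) * (hX.1.eigenvectorUnitary : Matrix n n ℂ)
      = 1 := Unitary.coe_star_mul_self _
  have hdd : diagonal (fun i => ((Real.sqrt (hX.1.eigenvalues i) : ℝ) : ℂ)) *
      diagonal (fun i => ((Real.sqrt (hX.1.eigenvalues i) : ℝ) : ℂ))
      = diagonal (RCLike.ofReal ∘ hX.1.eigenvalues) := by
    rw [Matrix.diagonal_mul_diagonal]
    congr 1
    funext i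
    simp only [Function.comp_apply]
    rw [← Complex.ofReal_mul, Real.mul_self_sqrt (hX.eigenvalues_nonneg i)]
    rfl
  conv_rhs => rw [hX.1.spectral_theorem]
  rw [Unitary.conjStarAlgAut_apply]
  simp only [Matrix.PosSemidef.sqrt, posSemidefSqrt, Matrix.mul_assoc]
  rw [← Matrix.mul_assoc (star _ : Matrix n n ℂ) _ _, hU, Matrix.one_mul, ← Matrix.mul_assoc _ _ (star _ : Matrix n n ℂ), hdd]

/-! ### Auxiliary lemmas for Statement 13 -/

section Aux13
variable {n : Type*} [Fintype n] [DecidableEq n]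
set_option linter.unusedSectionVars false

lemma aux13_trace_re_nonneg {M : Matrix n n ℂ} (hM : M.PosSemidef) : 0 ≤ M.trace.re := by
  rw [Matrix.trace]
  have key : ∀ i, 0 ≤ (M i i).re := by
    intro i
    have h := hM.dotProduct_mulVec_nonneg (Pi.single i 1)
    have : star (Pi.single i 1 : n → ℂ) ⬝ᵥ (M *ᵥ Pi.single i 1) = M i i := by
      simp [dotProduct, Matrix.mulVec, Pi.single_apply, Finset.sum_ite_eq,
        dotProduct_single]
    rw [this] at h
    exact (Complex.le_def.mp h).1
  calc (0:ℝ) ≤ ∑ i, (M i i).re := Finset.sum_nonneg fun i _ => key i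
    _ = (∑ i, M.diag i).re := by rw [Complex.re_sum]; rfl

lemma aux13_trace_mul_re_nonneg {A B : Matrix n n ℂ} (hA : A.PosSemidef) (hB : B.PosSemidef) :
    0 ≤ (A * B).trace.re := by
  have h2 : (hA.sqrt * B * hA.sqrt).PosSemidef := by
    have := hB.conjTranspose_mul_mul_same hA.sqrt
    rwa [hA.posSemidef_sqrt.1.eq] at this
  have h1 : (A * B).trace = (hA.sqrt * B * hA.sqrt).trace := by
    conv_lhs => rw [← hA.sqrt_mul_self]
    rw [Matrix.mul_assoc, Matrix.trace_mul_comm, Matrix.mul_assoc]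
  rw [h1]; exact aux13_trace_re_nonneg h2

lemma aux13_trace_mul_contraction_le {S V : Matrix n n ℂ} (hS : S.PosSemidef)
    (hV : ((1 : Matrix n n ℂ) - Vᴴ * V).PosSemidef) : (S * V).trace.re ≤ S.trace.re := by
  have hD : ((2:ℂ) • 1 - V - Vᴴ).PosSemidef := by
    have h1 : ((1 - V)ᴴ * (1 - V)).PosSemidef := Matrix.posSemidef_conjTranspose_mul_self _
    have h2 := h1.add hV
    have : (1 - V)ᴴ * (1 - V) + (1 - Vᴴ * V) = (2:ℂ) • 1 - V - Vᴴ := by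
      rw [Matrix.conjTranspose_sub, Matrix.conjTranspose_one]
      ring_nf
      rw [Matrix.sub_mul, Matrix.mul_sub, Matrix.mul_sub]
      simp [Matrix.mul_one, Matrix.one_mul, two_smul]
      abel
    rwa [this] at h2
  have key := aux13_trace_mul_re_nonneg hS hD
  have expand : (S * ((2:ℂ) • 1 - V - Vᴴ)).trace
      = (2:ℂ) * S.trace - (S * V).trace - (S * Vᴴ).trace := by
    rw [Matrix.mul_sub, Matrix.mul_sub, Matrix.trace_sub, Matrix.trace_sub]
    rw [Matrix.mul_smul, Matrix.mul_one, Matrix.trace_smul]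
    simp [smul_eq_mul]
  have hconj : (S * Vᴴ).trace = star ((S * V).trace) := by
    have : S * Vᴴ = (V * S)ᴴ := by rw [Matrix.conjTranspose_mul, hS.1.eq]
    rw [this, Matrix.trace_conjTranspose, Matrix.trace_mul_comm]
  rw [expand, hconj] at key
  have : ((2:ℂ) * S.trace - (S * V).trace - star ((S * V).trace)).re
      = 2 * S.trace.re - 2 * (S * V).trace.re := by
    simp [Complex.sub_re, Complex.mul_re]
    ring
  rw [this] at key
  linarith

lemma aux13_posSemidef_real_smul {A : Matrix n n ℂ} (hA : A.PosSemidef) {c : ℝ} (hc : 0 ≤ c) :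
    ((c : ℂ) • A).PosSemidef := by
  refine Matrix.PosSemidef.of_dotProduct_mulVec_nonneg ?_ ?_
  · unfold Matrix.IsHermitian
    rw [Matrix.conjTranspose_smul, hA.1.eq]
    congr 1
    simp
  · intro x
    have h := hA.dotProduct_mulVec_nonneg x
    have : star x ⬝ᵥ ((c : ℂ) • A) *ᵥ x = (c : ℂ) * (star x ⬝ᵥ A *ᵥ x) := by
      rw [Matrix.smul_mulVec, dotProduct_smul, smul_eq_mul]
    rw [this]
    exact mul_nonneg (by exact_mod_cast hc) h

lemma aux13_dot_pos_of_ne_zero {v : n → ℂ} (hv : v ≠ 0) : 0 < (star v ⬝ᵥ v).re := by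
  have h0 : 0 ≤ star v ⬝ᵥ v := dotProduct_star_self_nonneg v
  have hne : star v ⬝ᵥ v ≠ 0 := fun h => hv (dotProduct_star_self_eq_zero.mp h)
  have := (Complex.le_def.mp h0).1
  rcases lt_or_eq_of_le this with h | h
  · simpa using h
  · exfalso; apply hne
    have him := (Complex.le_def.mp h0).2
    apply Complex.ext <;> simp [← h, ← him]

lemma aux13_one_sub_psd_of_eigenvalues_le {M : Matrix n n ℂ} (hM : M.IsHermitian)
    (h : ∀ i, hM.eigenvalues i ≤ 1) : ((1 : Matrix n n ℂ) - M).PosSemidef := by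
  set U : Matrix n n ℂ := (hM.eigenvectorUnitary : Matrix n n ℂ) with hUdef
  have hU : U * star U = 1 := (Matrix.mem_unitaryGroup_iff).mp hM.eigenvectorUnitary.2
  have hdiag : ((1 : Matrix n n ℂ) - diagonal (RCLike.ofReal ∘ hM.eigenvalues)).PosSemidef := by
    rw [← Matrix.diagonal_one, Matrix.diagonal_sub]
    apply Matrix.PosSemidef.diagonal
    intro i
    simp only [Pi.sub_apply, Function.comp_apply, Pi.one_apply]
    rw [Complex.le_def]
    constructor
    · simpa using h i
    · simp
  have key : (1 : Matrix n n ℂ) - M = U * ((1 : Matrix n n ℂ)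
      - diagonal (RCLike.ofReal ∘ hM.eigenvalues)) * Uᴴ := by
    rw [Matrix.mul_sub, Matrix.sub_mul, Matrix.mul_one]
    rw [← Matrix.star_eq_conjTranspose, hU]
    congr 1
    exact hM.spectral_theorem
  rw [key]
  exact hdiag.mul_mul_conjTranspose_same U

-- the flip lemma: W Wᴴ ≤ 1  →  Wᴴ W ≤ 1
lemma aux13_flip_contraction {W : Matrix n n ℂ} (hW : ((1 : Matrix n n ℂ) - W * Wᴴ).PosSemidef) :
    ((1 : Matrix n n ℂ) - Wᴴ * W).PosSemidef := by
  have hM : (Wᴴ * W).PosSemidef := Matrix.posSemidef_conjTranspose_mul_self W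
  apply aux13_one_sub_psd_of_eigenvalues_le hM.1
  intro i
  set lam := hM.1.eigenvalues i with hlam
  have hl0 : 0 ≤ lam := hM.eigenvalues_nonneg i
  set v : n → ℂ := ⇑(hM.1.eigenvectorBasis i) with hv
  have hvne : v ≠ 0 := by
    have := hM.1.eigenvectorBasis.toBasis.ne_zero i
    rw [OrthonormalBasis.coe_toBasis] at this
    intro h; apply this
    ext j; exact congrFun h j
  have heig : (Wᴴ * W) *ᵥ v = lam • v := hM.1.mulVec_eigenvectorBasis i
  set y : n → ℂ := W *ᵥ v with hy
  have hWy : Wᴴ *ᵥ y = lam • v := by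
    rw [hy, Matrix.mulVec_mulVec, heig]
  have hny : star y ⬝ᵥ y = (lam : ℂ) * (star v ⬝ᵥ v) := by
    rw [hy, Matrix.star_mulVec, ← Matrix.dotProduct_mulVec, Matrix.mulVec_mulVec, heig]
    simp [dotProduct_smul, Complex.real_smul]
  have hq := hW.dotProduct_mulVec_nonneg y
  have hqval : star y ⬝ᵥ ((1 : Matrix n n ℂ) - W * Wᴴ) *ᵥ y
      = ((1 - lam) * lam : ℝ) * (star v ⬝ᵥ v) := by
    rw [Matrix.sub_mulVec, dotProduct_sub, Matrix.one_mulVec]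
    rw [← Matrix.mulVec_mulVec, hWy, Matrix.mulVec_smul, dotProduct_smul, hny]
    push_cast
    rw [Complex.real_smul]
    push_cast
    ring
  rw [hqval] at hq
  have hre := (Complex.le_def.mp hq).1
  have hvpos : 0 < (star v ⬝ᵥ v).re := aux13_dot_pos_of_ne_zero hvne
  have him : (star v ⬝ᵥ v).im = 0 := by
    have h0 : (0:ℂ) ≤ star v ⬝ᵥ v := dotProduct_star_self_nonneg v
    simpa using (Complex.le_def.mp h0).2.symm
  have : 0 ≤ (1 - lam) * lam := by
    have heq : (((1 - lam) * lam : ℝ) * (star v ⬝ᵥ v) : ℂ).re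
        = ((1 - lam) * lam) * (star v ⬝ᵥ v).re := by
      simp [Complex.mul_re, him]
    rw [heq] at hre
    simp at hre
    nlinarith
  nlinarith

lemma aux13_sub_psd_of_sq_sub_sq_psd {a b : Matrix n n ℂ} (ha : a.PosSemidef) (hb : b.PosSemidef)
    (h2 : (a * a - b * b).PosSemidef) : (a - b).PosSemidef := by
  have hH : (a - b).IsHermitian := ha.1.sub hb.1
  apply hH.posSemidef_iff_eigenvalues_nonneg.mpr
  intro i
  show (0:ℝ) ≤ hH.eigenvalues i
  set mu := hH.eigenvalues i with hmu
  set v : n → ℂ := ⇑(hH.eigenvectorBasis i) with hv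
  have hvne : v ≠ 0 := by
    have := hH.eigenvectorBasis.toBasis.ne_zero i
    rw [OrthonormalBasis.coe_toBasis] at this
    intro h; apply this; ext j; exact congrFun h j
  have heig : (a - b) *ᵥ v = mu • v := hH.mulVec_eigenvectorBasis i
  have hsplit : a * a - b * b = a * (a - b) + (a - b) * b := by noncomm_ring
  have hqa : (0:ℂ) ≤ star v ⬝ᵥ a *ᵥ v := ha.dotProduct_mulVec_nonneg v
  have hqb : (0:ℂ) ≤ star v ⬝ᵥ b *ᵥ v := hb.dotProduct_mulVec_nonneg v
  have hvm : star v ᵥ* (a - b) = mu • star v := by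
    have h1 : star v ᵥ* (a - b) = star ((a - b) *ᵥ v) := by
      rw [Matrix.star_mulVec, hH.eq]
    rw [h1, heig, star_smul]
    simp
  have ht1 : star v ⬝ᵥ (a * (a - b)) *ᵥ v = (mu:ℂ) * (star v ⬝ᵥ a *ᵥ v) := by
    rw [← Matrix.mulVec_mulVec, heig, Matrix.mulVec_smul, dotProduct_smul]
    simp [Complex.real_smul]
  have ht2 : star v ⬝ᵥ ((a - b) * b) *ᵥ v = (mu:ℂ) * (star v ⬝ᵥ b *ᵥ v) := by
    rw [← Matrix.mulVec_mulVec, Matrix.dotProduct_mulVec, hvm, smul_dotProduct]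
    simp [Complex.real_smul]
  have key : star v ⬝ᵥ (a * a - b * b) *ᵥ v
      = (mu:ℂ) * (star v ⬝ᵥ a *ᵥ v + star v ⬝ᵥ b *ᵥ v) := by
    rw [hsplit, Matrix.add_mulVec, dotProduct_add, ht1, ht2]
    ring
  have hpos := h2.dotProduct_mulVec_nonneg v
  rw [key] at hpos
  have hre := (Complex.le_def.mp hpos).1
  have har := (Complex.le_def.mp hqa).1
  have hai := (Complex.le_def.mp hqa).2
  have hbr := (Complex.le_def.mp hqb).1
  have hbi := (Complex.le_def.mp hqb).2
  simp only [Complex.zero_re, Complex.zero_im] at hre har hai hbr hbi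
  have hre' : 0 ≤ mu * ((star v ⬝ᵥ a *ᵥ v).re + (star v ⬝ᵥ b *ᵥ v).re) := by
    have : ((mu:ℂ) * (star v ⬝ᵥ a *ᵥ v + star v ⬝ᵥ b *ᵥ v)).re
        = mu * ((star v ⬝ᵥ a *ᵥ v).re + (star v ⬝ᵥ b *ᵥ v).re) := by
      simp [Complex.mul_re, ← hai, ← hbi]
    rw [this] at hre
    simpa using hre
  rcases lt_or_eq_of_le (add_nonneg har hbr) with hsum | hsum
  · nlinarith
  · -- both zero, so a v = 0 and b v = 0
    have hza : (star v ⬝ᵥ a *ᵥ v) = 0 := by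
      apply Complex.ext
      · simp only [Complex.zero_re]; linarith
      · simp [← hai]
    have hzb : (star v ⬝ᵥ b *ᵥ v) = 0 := by
      apply Complex.ext
      · simp only [Complex.zero_re]; linarith
      · simp [← hbi]
    have hav : a *ᵥ v = 0 := (ha.dotProduct_mulVec_zero_iff v).mp hza
    have hbv : b *ᵥ v = 0 := (hb.dotProduct_mulVec_zero_iff v).mp hzb
    have : mu • v = 0 := by
      rw [← heig, Matrix.sub_mulVec, hav, hbv, sub_zero]
    rcases smul_eq_zero.mp this with h | h
    · simp [h]
    · exact absurd h hvne

lemma aux13_smul_one_posDef {ε : ℝ} (hε : 0 < ε) : ((ε : ℂ) • (1 : Matrix n n ℂ)).PosDef := by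
  rw [Matrix.smul_one_eq_diagonal]
  rw [Matrix.posDef_diagonal_iff]
  intro i
  exact_mod_cast Complex.zero_lt_real.mpr hε

/-- Main regularization lemma: if `X * Xᴴ = Q * Q` with `Q` psd, then
`W := (Q + ε)⁻¹ * X` satisfies `X = (Q + ε) * W` and `1 - Wᴴ W ≥ 0`. -/
lemma aux13_reg_polar {Q X : Matrix n n ℂ} (hQ : Q.PosSemidef) (hX : X * Xᴴ = Q * Q)
    {ε : ℝ} (hε : 0 < ε) :
    X = (Q + (ε : ℂ) • 1) * ((Q + (ε : ℂ) • 1)⁻¹ * X) ∧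
    ((1 : Matrix n n ℂ) - ((Q + (ε : ℂ) • 1)⁻¹ * X)ᴴ * ((Q + (ε : ℂ) • 1)⁻¹ * X)).PosSemidef := by
  set E : Matrix n n ℂ := Q + (ε : ℂ) • 1 with hEdef
  have hE : E.PosDef := Matrix.PosDef.posSemidef_add hQ (aux13_smul_one_posDef hε)
  have hEdet : IsUnit E.det := isUnit_iff_ne_zero.mpr (ne_of_gt hE.det_pos)
  have hEinvH : E⁻¹ᴴ = E⁻¹ := by rw [Matrix.conjTranspose_nonsing_inv, hE.1.eq]
  have hmul : E * E⁻¹ = 1 := Matrix.mul_nonsing_inv E hEdet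
  have hmul' : E⁻¹ * E = 1 := Matrix.nonsing_inv_mul E hEdet
  constructor
  · rw [← Matrix.mul_assoc, hmul, Matrix.one_mul]
  · apply aux13_flip_contraction
    set W : Matrix n n ℂ := E⁻¹ * X with hWdef
    have hWWH : W * Wᴴ = E⁻¹ * (Q * Q) * E⁻¹ := by
      rw [hWdef, Matrix.conjTranspose_mul, hEinvH, ← hX]
      simp only [Matrix.mul_assoc]
    have hEE : E * E - Q * Q = ((2 * ε : ℝ) : ℂ) • Q + ((ε * ε : ℝ) : ℂ) • 1 := by
      rw [hEdef]
      rw [Matrix.add_mul, Matrix.mul_add, Matrix.mul_add]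
      rw [Matrix.smul_mul, Matrix.mul_smul, Matrix.mul_smul, Matrix.one_mul]
      simp only [Matrix.mul_one, smul_smul]
      push_cast
      rw [two_mul, add_smul]
      abel
    have hpsd : (E * E - Q * Q).PosSemidef := by
      rw [hEE]
      exact (aux13_posSemidef_real_smul hQ (by positivity)).add (aux13_posSemidef_real_smul Matrix.PosSemidef.one (by positivity))
    have hkey : (1 : Matrix n n ℂ) - W * Wᴴ = E⁻¹ᴴ * (E * E - Q * Q) * E⁻¹ := by
      rw [hEinvH, hWWH, Matrix.mul_sub, Matrix.sub_mul]
      congr 1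
      rw [← Matrix.mul_assoc, Matrix.mul_assoc (E⁻¹ * E), hmul', Matrix.one_mul, hmul]
    rw [hkey]
    exact hpsd.conjTranspose_mul_mul_same E⁻¹

lemma aux13_contraction_mul {V₁ V₂ : Matrix n n ℂ} (h1 : ((1:Matrix n n ℂ) - V₁ᴴ * V₁).PosSemidef)
    (h2 : ((1:Matrix n n ℂ) - V₂ᴴ * V₂).PosSemidef) :
    ((1:Matrix n n ℂ) - (V₁ * V₂)ᴴ * (V₁ * V₂)).PosSemidef := by
  have hc : (V₂ᴴ * ((1:Matrix n n ℂ) - V₁ᴴ * V₁) * V₂).PosSemidef :=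
    h1.conjTranspose_mul_mul_same V₂
  have hs := hc.add h2
  have heq : V₂ᴴ * ((1:Matrix n n ℂ) - V₁ᴴ * V₁) * V₂ + ((1:Matrix n n ℂ) - V₂ᴴ * V₂)
      = (1:Matrix n n ℂ) - (V₁ * V₂)ᴴ * (V₁ * V₂) := by
    rw [Matrix.conjTranspose_mul, Matrix.mul_sub, Matrix.sub_mul, Matrix.mul_one]
    simp only [Matrix.mul_assoc]
    abel
  rwa [heq] at hs

lemma aux13_msqrt_of_psd {X : Matrix n n ℂ} (hX : X.PosSemidef) :
    msqrt X = hX.sqrt := by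
  rw [msqrt, dif_pos hX]

lemma aux13_re_trace_le_fid (ρ K : Matrix n n ℂ) (hρ : ρ.PosSemidef) :
    (ρ * K).trace.re ≤ fid ρ (K * ρ * Kᴴ) := by
  -- setup
  set P := msqrt ρ with hPdef
  have hP : P.PosSemidef := by rw [hPdef, aux13_msqrt_of_psd hρ]; exact hρ.posSemidef_sqrt
  have hPP : P * P = ρ := by rw [hPdef, aux13_msqrt_of_psd hρ]; exact hρ.sqrt_mul_self
  have hτ : (K * ρ * Kᴴ).PosSemidef := by
    have : K * ρ * Kᴴ = (K * P) * (K * P)ᴴ := by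
      rw [Matrix.conjTranspose_mul, hP.1.eq, ← hPP]
      simp only [Matrix.mul_assoc]
    rw [this]
    exact Matrix.posSemidef_self_mul_conjTranspose _
  set Q := msqrt (K * ρ * Kᴴ) with hQdef
  have hQ : Q.PosSemidef := by rw [hQdef, aux13_msqrt_of_psd hτ]; exact hτ.posSemidef_sqrt
  have hQQ : Q * Q = K * ρ * Kᴴ := by rw [hQdef, aux13_msqrt_of_psd hτ]; exact hτ.sqrt_mul_self
  -- fid as trace of R
  have hfid : fid ρ (K * ρ * Kᴴ) =
      ((Matrix.posSemidef_conjTranspose_mul_self (P * Q)).sqrt).trace.re := by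
    rw [fid, traceNorm]
  set R := (Matrix.posSemidef_conjTranspose_mul_self (P * Q)).sqrt with hRdef
  have hR : R.PosSemidef := Matrix.PosSemidef.posSemidef_sqrt _
  have hRR : R * R = (P * Q)ᴴ * (P * Q) := Matrix.PosSemidef.sqrt_mul_self _
  rw [hfid]
  -- the KP polar relation : (K*P)*(K*P)ᴴ = Q*Q
  have hKP : (K * P) * (K * P)ᴴ = Q * Q := by
    rw [hQQ, Matrix.conjTranspose_mul, hP.1.eq, ← hPP]
    simp only [Matrix.mul_assoc]
  -- ε-approximation
  have main : ∀ ε : ℝ, 0 < ε →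
      (ρ * K).trace.re ≤ R.trace.re + ε * (Fintype.card n : ℝ) + ε * P.trace.re := by
    intro ε hε
    obtain ⟨hXE, hW⟩ := aux13_reg_polar hQ hKP hε
    set E : Matrix n n ℂ := Q + (ε : ℂ) • 1 with hEdef
    set W : Matrix n n ℂ := E⁻¹ * (K * P) with hWdef
    -- second regularization for A := P * Q
    have hAA : (P * Q)ᴴ * ((P * Q)ᴴ)ᴴ = R * R := by
      rw [Matrix.conjTranspose_conjTranspose, hRR]
    obtain ⟨hYF, hAD⟩ := aux13_reg_polar hR hAA hε
    set F : Matrix n n ℂ := R + (ε : ℂ) • 1 with hFdef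
    set AD : Matrix n n ℂ := F⁻¹ * (P * Q)ᴴ with hADdef
    -- so  (P*Q)ᴴ = F * AD, i.e.  P * Q = ADᴴ * F  (F hermitian)
    have hFH : Fᴴ = F := by
      rw [hFdef, Matrix.conjTranspose_add, hR.1.eq, Matrix.conjTranspose_smul,
        Matrix.conjTranspose_one]
      norm_num
    have hPQ : P * Q = ADᴴ * F := by
      have := congrArg Matrix.conjTranspose hYF
      rwa [Matrix.conjTranspose_conjTranspose, Matrix.conjTranspose_mul, hFH] at this
    -- trace chain
    have e1 : (ρ * K).trace = ((W * P) * E).trace := by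
      rw [Matrix.trace_mul_comm, ← hPP, ← Matrix.mul_assoc, hXE, Matrix.mul_assoc,
        Matrix.trace_mul_comm]
    have e2 : ((W * P) * E).trace = ((W * P) * Q).trace + (ε : ℂ) * (P * W).trace := by
      rw [hEdef, Matrix.mul_add, Matrix.trace_add, Matrix.mul_smul, Matrix.mul_one,
        Matrix.trace_smul, smul_eq_mul, Matrix.trace_mul_comm W P]
    have e3 : ((W * P) * Q).trace = ((W * ADᴴ) * F).trace := by
      rw [Matrix.mul_assoc W P Q, hPQ, ← Matrix.mul_assoc]
    have e4 : ((W * ADᴴ) * F).trace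
        = (R * (W * ADᴴ)).trace + (ε : ℂ) * (W * ADᴴ).trace := by
      rw [hFdef, Matrix.mul_add, Matrix.trace_add, Matrix.mul_smul, Matrix.mul_one,
        Matrix.trace_smul, smul_eq_mul, Matrix.trace_mul_comm _ R]
    -- contraction properties
    have hADflip : ((1 : Matrix n n ℂ) - AD * ADᴴ).PosSemidef := by
      have := aux13_flip_contraction (W := ADᴴ)
        (by rwa [Matrix.conjTranspose_conjTranspose])
      rwa [Matrix.conjTranspose_conjTranspose] at this
    have hV : ((1 : Matrix n n ℂ) - (W * ADᴴ)ᴴ * (W * ADᴴ)).PosSemidef := by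
      apply aux13_contraction_mul hW
      rwa [Matrix.conjTranspose_conjTranspose]
    -- bounds
    have b1 : (R * (W * ADᴴ)).trace.re ≤ R.trace.re := aux13_trace_mul_contraction_le hR hV
    have b2 : (W * ADᴴ).trace.re ≤ (Fintype.card n : ℝ) := by
      have := aux13_trace_mul_contraction_le Matrix.PosSemidef.one hV
      rwa [Matrix.one_mul, Matrix.trace_one, Complex.natCast_re] at this
    have b3 : (P * W).trace.re ≤ P.trace.re := aux13_trace_mul_contraction_le hP hW
    -- combine
    have e_all : (ρ * K).trace = (R * (W * ADᴴ)).trace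
        + (ε : ℂ) * (W * ADᴴ).trace + (ε : ℂ) * (P * W).trace := by
      rw [e1, e2, e3, e4]
    have hre : (ρ * K).trace.re = (R * (W * ADᴴ)).trace.re
        + ε * (W * ADᴴ).trace.re + ε * (P * W).trace.re := by
      rw [e_all]
      simp [Complex.add_re, Complex.mul_re]
    rw [hre]
    have m2 : ε * (W * ADᴴ).trace.re ≤ ε * (Fintype.card n : ℝ) :=
      mul_le_mul_of_nonneg_left b2 hε.le
    have m3 : ε * (P * W).trace.re ≤ ε * P.trace.re :=
      mul_le_mul_of_nonneg_left b3 hε.le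
    linarith
  -- pass to the limit
  apply le_of_forall_pos_le_add
  intro η hη
  set C : ℝ := (Fintype.card n : ℝ) + P.trace.re with hCdef
  have hC : 0 ≤ C := add_nonneg (Nat.cast_nonneg _) (aux13_trace_re_nonneg hP)
  have hpos : (0:ℝ) < C + 1 := by linarith
  have key := main (η / (C + 1)) (by positivity)
  have h1 : η / (C + 1) * C ≤ η := by
    rw [div_mul_eq_mul_div, div_le_iff₀ hpos]
    nlinarith
  calc (ρ * K).trace.re
      ≤ R.trace.re + η / (C+1) * (Fintype.card n : ℝ) + η / (C+1) * P.trace.re := key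
    _ = R.trace.re + η / (C+1) * C := by rw [hCdef]; ring
    _ ≤ R.trace.re + η := by linarith

lemma aux13_key_B (ρB σ Δ : Matrix n n ℂ) (hρB : ρB.PosSemidef) (htr : ρB.trace = 1)
    (hσ : σ.PosSemidef) (hΔ : Δ.PosSemidef) (hle : (σ + Δ - ρB).PosSemidef)
    (hpd : (σ + Δ).PosDef) :
    1 - Δ.trace.re ≤ (ρB * (msqrt σ * (msqrt (σ + Δ))⁻¹)).trace.re := by
  set a := msqrt (σ + Δ) with hadef
  set b := msqrt σ with hbdef
  have ha : a.PosSemidef := by rw [hadef, aux13_msqrt_of_psd hpd.posSemidef]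
                               exact Matrix.PosSemidef.posSemidef_sqrt _
  have haa : a * a = σ + Δ := by rw [hadef, aux13_msqrt_of_psd hpd.posSemidef]
                                 exact Matrix.PosSemidef.sqrt_mul_self _
  have hb : b.PosSemidef := by rw [hbdef, aux13_msqrt_of_psd hσ]
                               exact Matrix.PosSemidef.posSemidef_sqrt _
  have hbb : b * b = σ := by rw [hbdef, aux13_msqrt_of_psd hσ]
                             exact Matrix.PosSemidef.sqrt_mul_self _
  have hdet : IsUnit a.det := by
    have h := hpd.det_pos
    rw [← haa, Matrix.det_mul] at h
    apply isUnit_iff_ne_zero.mpr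
    intro h0
    rw [h0, mul_zero] at h
    exact lt_irrefl _ h
  have hmul : a * a⁻¹ = 1 := Matrix.mul_nonsing_inv a hdet
  have hmul' : a⁻¹ * a = 1 := Matrix.nonsing_inv_mul a hdet
  have hainvH : a⁻¹ᴴ = a⁻¹ := by rw [Matrix.conjTranspose_nonsing_inv, ha.1.eq]
  set ρ' := a⁻¹ * ρB * a⁻¹ with hρ'def
  have hρ' : ρ'.PosSemidef := by
    have := hρB.conjTranspose_mul_mul_same a⁻¹
    rwa [hainvH] at this
  have h1mρ' : ((1 : Matrix n n ℂ) - ρ').PosSemidef := by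
    have hcon := hle.conjTranspose_mul_mul_same a⁻¹
    rw [hainvH] at hcon
    have heq : a⁻¹ * (σ + Δ - ρB) * a⁻¹ = (1 : Matrix n n ℂ) - ρ' := by
      rw [Matrix.mul_sub, Matrix.sub_mul, hρ'def, ← haa]
      congr 1
      rw [← Matrix.mul_assoc, Matrix.mul_assoc a⁻¹ a a, ← Matrix.mul_assoc a⁻¹ a _, hmul',
        Matrix.one_mul, hmul]
    rwa [heq] at hcon
  set c := a - b with hcdef
  have hcH : cᴴ = c := by rw [hcdef, Matrix.conjTranspose_sub, ha.1.eq, hb.1.eq]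
  have hcc : (c * c).PosSemidef := by
    have := Matrix.posSemidef_conjTranspose_mul_self c
    rwa [hcH] at this
  have hcpsd : c.PosSemidef := by
    apply aux13_sub_psd_of_sq_sub_sq_psd ha hb
    rw [haa, hbb]
    have : σ + Δ - σ = Δ := by abel
    rwa [this]
  -- trace identities
  have mid1 : ρ' * (a * b) = a⁻¹ * (ρB * b) := by
    rw [hρ'def]
    rw [Matrix.mul_assoc (a⁻¹ * ρB) a⁻¹ (a * b), ← Matrix.mul_assoc a⁻¹ a b, hmul',
      Matrix.one_mul, Matrix.mul_assoc]
  set z : ℂ := (ρ' * (a * b)).trace with hzdef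
  have t1 : (ρB * (b * a⁻¹)).trace = z := by
    rw [hzdef, mid1, ← Matrix.mul_assoc, Matrix.trace_mul_comm]
  have t2 : (ρ' * (a * a)).trace = 1 := by
    have mid2 : ρ' * (a * a) = a⁻¹ * (ρB * a) := by
      rw [hρ'def]
      rw [Matrix.mul_assoc (a⁻¹ * ρB) a⁻¹ (a * a), ← Matrix.mul_assoc a⁻¹ a a, hmul',
        Matrix.one_mul, Matrix.mul_assoc]
    rw [mid2, Matrix.trace_mul_comm, Matrix.mul_assoc, hmul, Matrix.mul_one, htr]
  have tconj : (ρ' * (b * a)).trace = star z := by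
    rw [hzdef, ← Matrix.trace_conjTranspose, Matrix.conjTranspose_mul,
      Matrix.conjTranspose_mul, ha.1.eq, hb.1.eq, hρ'.1.eq, Matrix.trace_mul_comm]
  -- key matrix identity
  set X := Δ + c * c with hXdef
  have hX : X.PosSemidef := hΔ.add hcc
  have hΔeq : Δ = a * a - b * b := by rw [haa, hbb]; abel
  have hXexp : X = (2:ℂ) • (a * a) - a * b - b * a := by
    rw [hXdef, hcdef, hΔeq, two_smul, Matrix.sub_mul, Matrix.mul_sub, Matrix.mul_sub]
    abel
  have htrρX : (ρ' * X).trace = 2 - z - star z := by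
    rw [hXexp, Matrix.mul_sub, Matrix.mul_sub, Matrix.mul_smul,
      Matrix.trace_sub, Matrix.trace_sub, Matrix.trace_smul, t2, tconj, smul_eq_mul, mul_one]
  have hbound1 : 0 ≤ (((1 : Matrix n n ℂ) - ρ') * X).trace.re :=
    aux13_trace_mul_re_nonneg h1mρ' hX
  have hexp1 : (((1 : Matrix n n ℂ) - ρ') * X).trace = X.trace - (ρ' * X).trace := by
    rw [Matrix.sub_mul, Matrix.trace_sub, Matrix.one_mul]
  have hΔcc : Δ - c * c = c * b + b * c := by
    rw [hΔeq, hcdef]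
    noncomm_ring
  have htrΔcc : Δ.trace - (c * c).trace = 2 * (c * b).trace := by
    have := congrArg Matrix.trace hΔcc
    rw [Matrix.trace_sub, Matrix.trace_add, Matrix.trace_mul_comm b c] at this
    rw [this]; ring
  have hcb : 0 ≤ (c * b).trace.re := aux13_trace_mul_re_nonneg hcpsd hb
  have hXtr : X.trace = Δ.trace + (c * c).trace := by
    rw [hXdef, Matrix.trace_add]
  -- real part bookkeeping
  rw [t1]
  have r1 : (ρ' * X).trace.re = 2 - 2 * z.re := by
    rw [htrρX]
    simp [Complex.sub_re, Complex.star_def, Complex.conj_re]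
    ring
  have r2 : (((1 : Matrix n n ℂ) - ρ') * X).trace.re = X.trace.re - (ρ' * X).trace.re := by
    rw [hexp1, Complex.sub_re]
  have r3 : X.trace.re = Δ.trace.re + (c * c).trace.re := by rw [hXtr, Complex.add_re]
  have r4 : Δ.trace.re - (c * c).trace.re = 2 * (c * b).trace.re := by
    have h' := congrArg Complex.re htrΔcc
    rw [Complex.sub_re, Complex.mul_re] at h'
    simpa using h'
  linarith

end Aux13

lemma aux13_mySumCollapse {α β : Type*} [Fintype α] [DecidableEq α] [Fintype β] (k : α)
    (f : α → β → ℂ) :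
    (∑ i : α, ∑ j : β, if i = k then f i j else 0) = ∑ j : β, f k j := by
  rw [Finset.sum_comm]
  simp

section Aux13b
variable {A B : Type*} [Fintype A] [DecidableEq A] [Fintype B] [DecidableEq B]
set_option linter.unusedSectionVars false

lemma aux13_trace_mul_kron_one (ρ : Matrix (A × B) (A × B) ℂ) (G : Matrix B B ℂ) :
    (ρ * ((1 : Matrix A A ℂ) ⊗ₖ G)).trace = ((ptraceA ρ) * G).trace := by
  rw [Matrix.trace, Matrix.trace]
  simp only [Matrix.diag_apply, Matrix.mul_apply, Matrix.kroneckerMap_apply, ptraceA,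
    Matrix.of_apply, Matrix.one_apply, Fintype.sum_prod_type, mul_ite, ite_mul, one_mul,
    zero_mul, mul_zero, mul_one, Finset.sum_ite_eq, Finset.sum_ite_eq', Finset.mem_univ,
    if_true, Finset.sum_mul]
  rw [Finset.sum_comm]
  apply Finset.sum_congr rfl
  intro a _
  calc (∑ x : A, ∑ x1 : A, ∑ x2 : B, if x1 = x then ρ (x, a) (x1, x2) * G x2 a else 0)
      = ∑ x : A, ∑ x2 : B, ρ (x, a) (x, x2) * G x2 a :=
        Finset.sum_congr rfl fun x _ => aux13_mySumCollapse x _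
    _ = ∑ x2 : B, ∑ x : A, ρ (x, a) (x, x2) * G x2 a := Finset.sum_comm
    _ = ∑ x2 : B, ∑ i : A, ρ (i, a) (i, x2) * G x2 a := rfl

omit [DecidableEq A] [DecidableEq B] in
lemma aux13_ptraceA_trace (ρ : Matrix (A × B) (A × B) ℂ) : (ptraceA ρ).trace = ρ.trace := by
  rw [Matrix.trace, Matrix.trace]
  simp only [Matrix.diag_apply, ptraceA, Matrix.of_apply, Fintype.sum_prod_type]
  rw [Finset.sum_comm]

omit [DecidableEq B] in
lemma aux13_ptraceA_posSemidef {ρ : Matrix (A × B) (A × B) ℂ} (hρ : ρ.PosSemidef) :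
    (ptraceA ρ).PosSemidef := by
  refine Matrix.PosSemidef.of_dotProduct_mulVec_nonneg ?_ ?_
  · ext i j
    simp only [Matrix.conjTranspose_apply, ptraceA, Matrix.of_apply, star_sum]
    calc ∑ k, star (ρ (k, j) (k, i)) = ∑ k, ρᴴ (k, i) (k, j) := by
          apply Finset.sum_congr rfl; intro k _; rw [Matrix.conjTranspose_apply]
      _ = ∑ k, ρ (k, i) (k, j) := by rw [hρ.1.eq]
  · intro x
    have evalk : ∀ k : A, star (fun p : A × B => if p.1 = k then x p.2 else 0)
        ⬝ᵥ ρ *ᵥ (fun p : A × B => if p.1 = k then x p.2 else 0)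
        = ∑ i : B, ∑ j : B, star (x i) * (ρ (k, i) (k, j) * x j) := by
      intro k
      simp only [dotProduct, Matrix.mulVec, Pi.star_apply, Fintype.sum_prod_type,
        apply_ite star, star_zero, ite_mul, zero_mul, mul_ite, mul_zero, Finset.mul_sum]
      calc (∑ x1 : A, ∑ x2 : B, ∑ x3 : A, ∑ x4 : B,
              if x3 = k then if x1 = k then star (x x2) * (ρ (x1, x2) (x3, x4) * x x4)
                else 0 else 0)
          = ∑ x1 : A, ∑ x2 : B, ∑ x4 : B,
              if x1 = k then star (x x2) * (ρ (x1, x2) (k, x4) * x x4) else 0 :=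
            Finset.sum_congr rfl fun x1 _ => Finset.sum_congr rfl fun x2 _ => aux13_mySumCollapse k _
        _ = ∑ i : B, ∑ j : B, star (x i) * (ρ (k, i) (k, j) * x j) := by
            rw [Finset.sum_eq_single k]
            · simp
            · intro b _ hb; simp [hb]
            · intro h; exact absurd (Finset.mem_univ k) h
    have key : star x ⬝ᵥ (ptraceA ρ) *ᵥ x
        = ∑ k : A, ∑ i : B, ∑ j : B, star (x i) * (ρ (k, i) (k, j) * x j) := by
      simp only [dotProduct, Matrix.mulVec, ptraceA, Matrix.of_apply, Pi.star_apply,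
        Finset.mul_sum, Finset.sum_mul]
      calc (∑ u : B, ∑ v : B, ∑ i : A, star (x u) * (ρ (i, u) (i, v) * x v))
          = ∑ u : B, ∑ i : A, ∑ v : B, star (x u) * (ρ (i, u) (i, v) * x v) :=
            Finset.sum_congr rfl fun _ _ => Finset.sum_comm
        _ = ∑ i : A, ∑ u : B, ∑ v : B, star (x u) * (ρ (i, u) (i, v) * x v) :=
            Finset.sum_comm
    rw [key]
    apply Finset.sum_nonneg
    intro k _
    have := hρ.dotProduct_mulVec_nonneg (fun p : A × B => if p.1 = k then x p.2 else 0)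
    rwa [evalk k] at this

end Aux13b

/-- Fidelity bound for gentle conjugation. -/
theorem fidelity_bound_gentle_conjugation
    {A B : Type*} [Fintype A] [DecidableEq A] [Fintype B] [DecidableEq B]
    (ρAB : Matrix (A × B) (A × B) ℂ) (hρ : IsDensity ρAB)
    (σB ΔB : Matrix B B ℂ) (hσ : σB.PosSemidef) (hΔ : ΔB.PosSemidef)
    (hle : (σB + ΔB - ptraceA ρAB).PosSemidef) (hpd : (σB + ΔB).PosDef)
    (G : Matrix B B ℂ) (hG : G = msqrt σB * (msqrt (σB + ΔB))⁻¹) :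
    1 - (ΔB.trace).re ≤
      fid ρAB (((1 : Matrix A A ℂ) ⊗ₖ G) * ρAB * ((1 : Matrix A A ℂ) ⊗ₖ G)ᴴ) := by
  have h1 := aux13_re_trace_le_fid ρAB ((1 : Matrix A A ℂ) ⊗ₖ G) hρ.1
  refine le_trans ?_ h1
  rw [aux13_trace_mul_kron_one ρAB G, hG]
  exact aux13_key_B (ptraceA ρAB) σB ΔB (aux13_ptraceA_posSemidef hρ.1)
    (by rw [aux13_ptraceA_trace]; exact hρ.2) hσ hΔ hle hpd

end
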